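/- Let a, b, n be positive integers with a ≥ 3b, and h(j) = a·j^n + b for j ≥ 0, h(j) = 0 for j < 0. Then qdepth(h) ≥ 3. -/
import Mathlib


/-- `β_k^d(h) = Σ_{j ≤ k} (-1)^{k-j} C(d-j, k-j) h(j)` (a finite sum when `h`
vanishes for `j ≪ 0`). -/
noncomputable def beta (h : ℤ → ℤ) (d k : ℤ) : ℤ :=
  ∑ᶠ j ∈ Set.Iic k, (-1 : ℤ) ^ (k - j).toNat * ((d - j).toNat.choose (k - j).toNat : ℤ) * h j

/-- The set of `d` such that `β_k^d(h) ≥ 0` for all `k ≤ d`; its maximum is `qdepth h`. -/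
def qdepthSet (h : ℤ → ℤ) : Set ℤ := {d : ℤ | ∀ k ≤ d, 0 ≤ beta h d k}

lemma beta_eq_sum (h : ℤ → ℤ) (h0 : ∀ j : ℤ, j < 0 → h j = 0) (d k : ℤ) (hk : 0 ≤ k) :
    beta h d k = ∑ j ∈ Finset.Icc (0:ℤ) k,
      (-1 : ℤ) ^ (k - j).toNat * ((d - j).toNat.choose (k - j).toNat : ℤ) * h j := by
  unfold beta
  apply finsum_mem_eq_sum_of_inter_support_eq
  ext j
  simp only [Set.mem_inter_iff, Set.mem_Iic, Function.mem_support, Finset.coe_Icc,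
    Set.mem_Icc]
  constructor
  · rintro ⟨hjk, hne⟩
    refine ⟨⟨?_, hjk⟩, hne⟩
    by_contra hj
    push_neg at hj
    exact hne (by simp [h0 j hj])
  · rintro ⟨⟨_, hjk⟩, hne⟩
    exact ⟨hjk, hne⟩

lemma beta_neg (h : ℤ → ℤ) (h0 : ∀ j : ℤ, j < 0 → h j = 0) (d k : ℤ) (hk : k < 0) :
    beta h d k = 0 := by
  unfold beta
  apply finsum_mem_of_eqOn_zero
  intro j hj
  simp only [Set.mem_Iic] at hj
  simp [h0 j (lt_of_le_of_lt hj hk)]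

theorem qdepth_ge_three (a b : ℤ) (ha : 0 < a) (hb : 0 < b) (hab : 3 * b ≤ a)
    (n : ℕ) (hn : 1 ≤ n)
    (h : ℤ → ℤ) (hh : ∀ j : ℤ, h j = if 0 ≤ j then a * j ^ n + b else 0)
    (d : ℤ) (hd : IsGreatest (qdepthSet h) d) :
    3 ≤ d := by
  have h0 : ∀ j : ℤ, j < 0 → h j = 0 := by
    intro j hj; rw [hh]; simp [not_le.mpr hj]
  apply hd.2
  intro k hk
  rcases lt_or_ge k 0 with hkneg | hk0
  · rw [beta_neg h h0 3 k hkneg]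
  · have h2n : (2:ℤ) ≤ 2 ^ n := by
      calc (2:ℤ) = 2 ^ 1 := by ring
      _ ≤ 2 ^ n := pow_le_pow_right₀ (by norm_num) hn
    have h3n : (2:ℤ) ^ n ≤ 3 ^ n := pow_le_pow_left₀ (by norm_num) (by norm_num) n
    have hh0 : h 0 = b := by rw [hh]; simp [zero_pow (by omega : n ≠ 0)]
    have hh1 : h 1 = a + b := by rw [hh]; norm_num
    have hh2 : h 2 = a * 2 ^ n + b := by rw [hh]; norm_num
    have hh3 : h 3 = a * 3 ^ n + b := by rw [hh]; norm_num
    interval_cases k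
    · rw [beta_eq_sum h h0 3 0 le_rfl]
      simp [hh0]
      positivity
    · rw [beta_eq_sum h h0 3 1 (by norm_num)]
      have : Finset.Icc (0:ℤ) 1 = {0, 1} := by decide
      rw [this]
      simp [Finset.sum_insert, hh0, hh1]
      norm_num
      linarith
    · rw [beta_eq_sum h h0 3 2 (by norm_num)]
      have : Finset.Icc (0:ℤ) 2 = {0, 1, 2} := by decide
      rw [this]
      simp [Finset.sum_insert, hh0, hh1, hh2]
      norm_num
      nlinarith
    · rw [beta_eq_sum h h0 3 3 (by norm_num)]
      have : Finset.Icc (0:ℤ) 3 = {0, 1, 2, 3} := by decide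
      rw [this]
      simp [Finset.sum_insert, hh0, hh1, hh2, hh3]
      norm_num
      nlinarith
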